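/- Let p be a fixed odd prime and let q ∈ ℚ_p satisfy ‖q − 1‖_p < 1 and q ≠ 1. For every integer n ≥ 1, the q-Euler polynomials and numbers satisfy the recurrence q · E_{n,q}(1) + E_{n,q} = 0; that is, q · lim_{N→∞} (1/[p^N]_{−q}) Σ_{y=0}^{p^N − 1} [1 + y]_q^n (−q)^y + lim_{N→∞} (1/[p^N]_{−q}) Σ_{y=0}^{p^N − 1} [y]_q^n (−q)^y = 0, both limits existing. -/
import Mathlib
open Filter Finset

variable {p : ℕ} [Fact p.Prime]

lemma aux_norm_q {q : ℚ_[p]} (hq : ‖q - 1‖ < 1) : ‖q‖ = 1 := by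
  have h := IsUltrametricDist.norm_add_eq_max_of_norm_ne_norm (x := q - 1) (y := (1:ℚ_[p]))
    (by simp; intro h; rw [h] at hq; simp at hq)
  simpa [hq.le, max_eq_right] using h

lemma aux_norm_qm {q : ℚ_[p]} (hq : ‖q - 1‖ < 1) (m : ℕ) :
    ‖q ^ m - 1‖ ≤ ‖q - 1‖ := by
  have h1 : q ^ m - 1 = (∑ i ∈ range m, q ^ i) * (q - 1) := (geom_sum_mul q m).symm
  rw [h1, norm_mul]
  have h2 : ‖∑ i ∈ range m, q ^ i‖ ≤ 1 := by
    apply IsUltrametricDist.norm_sum_le_of_forall_le_of_nonneg zero_le_one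
    intro i _
    rw [norm_pow, aux_norm_q hq, one_pow]
  nlinarith [norm_nonneg (q - 1)]

lemma aux_den_ne (hp : Odd p) {q : ℚ_[p]} (hq : ‖q - 1‖ < 1) (m : ℕ) :
    q ^ (m + 1) + 1 ≠ 0 := by
  intro h
  have hqm : q ^ (m+1) = -1 := by linear_combination h
  have h2 : ‖q ^ (m+1) - 1‖ < 1 := lt_of_le_of_lt (aux_norm_qm hq _) hq
  rw [hqm] at h2
  have : (-1 - 1 : ℚ_[p]) = ((-2 : ℤ) : ℚ_[p]) := by push_cast; ring
  rw [this, Padic.norm_intCast_lt_one_iff] at h2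
  have hdvd : (p:ℤ) ∣ 2 := by simpa using (dvd_neg (α := ℤ)).mpr h2
  have hdvd2 : p ∣ 2 := by exact_mod_cast hdvd
  have : p ≤ 2 := Nat.le_of_dvd (by norm_num) hdvd2
  have h3 := (Fact.out : p.Prime).two_le
  interval_cases p
  · exact (by decide : ¬ Odd 2) hp

lemma aux_step {q : ℚ_[p]} (hq : ‖q - 1‖ < 1) {s : ℚ_[p]}
    (hs : ‖s - 1‖ ≤ max ‖q - 1‖ ((p:ℝ)⁻¹)) :
    ‖s ^ p - 1‖ ≤ max ‖q - 1‖ ((p:ℝ)⁻¹) * ‖s - 1‖ := by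
  have hp1 : (p:ℝ)⁻¹ ≤ 1 := by
    rw [inv_le_one_iff₀]
    right
    exact_mod_cast (Fact.out : p.Prime).one_le
  have hr1 : max ‖q - 1‖ ((p:ℝ)⁻¹) ≤ 1 := max_le hq.le hp1
  have hs1 : ‖s - 1‖ ≤ 1 := hs.trans hr1
  have hsn : ‖s‖ ≤ 1 := by
    calc ‖s‖ = ‖(s - 1) + 1‖ := by ring_nf
    _ ≤ max ‖s - 1‖ ‖(1:ℚ_[p])‖ := IsUltrametricDist.norm_add_le_max _ _
    _ ≤ 1 := by simp [hs1]
  have h1 : s ^ p - 1 = (∑ i ∈ range p, s ^ i) * (s - 1) := (geom_sum_mul s p).symm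
  rw [h1, norm_mul]
  gcongr ?_ * _
  have h2 : ∑ i ∈ range p, s ^ i = (p : ℚ_[p]) + ∑ i ∈ range p, (s ^ i - 1) := by
    rw [Finset.sum_sub_distrib]
    simp
  rw [h2]
  refine le_trans (IsUltrametricDist.norm_add_le_max _ _) (max_le ?_ ?_)
  · rw [Padic.norm_p]
    exact le_max_right _ _
  · refine le_trans (IsUltrametricDist.norm_sum_le_of_forall_le_of_nonneg
      (norm_nonneg (s-1)) fun i _ => ?_) hs
    calc ‖s ^ i - 1‖ = ‖(∑ j ∈ range i, s ^ j) * (s - 1)‖ := by rw [geom_sum_mul]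
    _ ≤ 1 * ‖s - 1‖ := by
        rw [norm_mul]
        gcongr
        exact IsUltrametricDist.norm_sum_le_of_forall_le_of_nonneg zero_le_one
          fun j _ => by simpa using pow_le_one₀ (norm_nonneg s) hsn
    _ = ‖s - 1‖ := one_mul _

lemma aux_tendsto {q : ℚ_[p]} (hq : ‖q - 1‖ < 1) :
    Tendsto (fun N : ℕ => q ^ p ^ N) atTop (nhds 1) := by
  set r := max ‖q - 1‖ ((p:ℝ)⁻¹) with hr
  have hr0 : 0 ≤ r := le_max_of_le_left (norm_nonneg _)
  have hrlt : r < 1 := by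
    apply max_lt hq
    rw [inv_lt_one_iff₀]
    right
    exact_mod_cast (Fact.out : p.Prime).one_lt
  have hbound : ∀ N : ℕ, ‖q ^ p ^ N - 1‖ ≤ r ^ N * ‖q - 1‖ := by
    intro N
    induction N with
    | zero => simp
    | succ N ih =>
      have hle : ‖q ^ p ^ N - 1‖ ≤ r := by
        refine ih.trans (le_trans ?_ (le_max_left _ _))
        calc r ^ N * ‖q - 1‖ ≤ 1 * ‖q - 1‖ := by
              gcongr
              exact pow_le_one₀ hr0 hrlt.le
        _ = ‖q - 1‖ := one_mul _
      have := aux_step hq hle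
      rw [← pow_mul, ← pow_succ] at this
      calc ‖q ^ p ^ (N + 1) - 1‖ ≤ r * ‖q ^ p ^ N - 1‖ := this
      _ ≤ r * (r ^ N * ‖q - 1‖) := by gcongr
      _ = r ^ (N + 1) * ‖q - 1‖ := by ring
  rw [tendsto_iff_norm_sub_tendsto_zero]
  refine squeeze_zero (fun N => norm_nonneg _) hbound ?_
  simpa using Tendsto.mul_const ‖q - 1‖ (tendsto_pow_atTop_nhds_zero_of_lt_one hr0 hrlt)

lemma aux_sum (hp : Odd p) {q : ℚ_[p]} (hq : ‖q - 1‖ < 1) (n : ℕ) (c : ℚ_[p])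
    {M : ℕ} (hM : Odd M) :
    ∑ y ∈ range M, (1 - c * q ^ y) ^ n * (-q) ^ y
      = ∑ k ∈ range (n + 1),
          (n.choose k : ℚ_[p]) * (-c) ^ k * ((q ^ (k + 1)) ^ M + 1) / (q ^ (k + 1) + 1) := by
  have hexp : ∀ y : ℕ, (1 - c * q ^ y) ^ n
      = ∑ k ∈ range (n + 1), (-(c * q ^ y)) ^ k * (n.choose k : ℚ_[p]) := by
    intro y
    rw [sub_eq_add_neg, add_comm]
    rw [add_pow]
    simp
  calc ∑ y ∈ range M, (1 - c * q ^ y) ^ n * (-q) ^ y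
      = ∑ y ∈ range M, ∑ k ∈ range (n + 1),
          (n.choose k : ℚ_[p]) * (-c) ^ k * (-(q ^ (k + 1))) ^ y := by
        refine Finset.sum_congr rfl fun y _ => ?_
        rw [hexp, Finset.sum_mul]
        refine Finset.sum_congr rfl fun k _ => ?_
        have e1 : (-(q ^ (k + 1))) ^ y = (-1) ^ y * ((q ^ y) ^ k * q ^ y) := by
          rw [neg_pow, ← pow_mul, add_mul, one_mul, pow_add, pow_mul']
        have e2 : (-(c * q ^ y)) ^ k = (-1) ^ k * (c ^ k * (q ^ y) ^ k) := by
          rw [neg_pow, mul_pow]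
        rw [e1, e2, neg_pow c, neg_pow q]
        ring
  _ = ∑ k ∈ range (n + 1), (n.choose k : ℚ_[p]) * (-c) ^ k
        * ∑ y ∈ range M, (-(q ^ (k + 1))) ^ y := by
        rw [Finset.sum_comm]
        simp [Finset.mul_sum]
  _ = ∑ k ∈ range (n + 1),
        (n.choose k : ℚ_[p]) * (-c) ^ k * ((q ^ (k + 1)) ^ M + 1) / (q ^ (k + 1) + 1) := by
        refine Finset.sum_congr rfl fun k _ => ?_
        have hne : -(q ^ (k + 1)) ≠ 1 := by
          intro h
          exact aux_den_ne hp hq k (by linear_combination -h)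
        rw [geom_sum_eq hne]
        rw [hM.neg_pow]
        rw [show -(q ^ (k + 1)) ^ M - 1 = -((q ^ (k + 1)) ^ M + 1) by ring,
          show -(q ^ (k + 1)) - 1 = -(q ^ (k + 1) + 1) by ring, neg_div_neg_eq, mul_div_assoc]

lemma aux_limit (hp : Odd p) {q : ℚ_[p]} (hq : ‖q - 1‖ < 1) (n : ℕ) (c : ℚ_[p]) :
    Tendsto
      (fun N : ℕ =>
        (1 / ((1 + q ^ p ^ N) / (1 + q))) *
          ∑ y ∈ Finset.range (p ^ N), ((1 - c * q ^ y) / (1 - q)) ^ n * (-q) ^ y)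
      atTop
      (nhds ((1 + q) / 2 * (((1 - q) ^ n)⁻¹ *
        ∑ k ∈ range (n + 1),
          (n.choose k : ℚ_[p]) * (-c) ^ k * (1 + 1) / (q ^ (k + 1) + 1)))) := by
  have heq : ∀ N : ℕ,
      (1 / ((1 + q ^ p ^ N) / (1 + q))) *
          ∑ y ∈ Finset.range (p ^ N), ((1 - c * q ^ y) / (1 - q)) ^ n * (-q) ^ y
        = (1 + q) / (1 + q ^ p ^ N) * (((1 - q) ^ n)⁻¹ *
            ∑ k ∈ range (n + 1),
              (n.choose k : ℚ_[p]) * (-c) ^ k * ((q ^ p ^ N) ^ (k + 1) + 1)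
                / (q ^ (k + 1) + 1)) := by
    intro N
    rw [one_div_div]
    congr 1
    have : ∑ y ∈ Finset.range (p ^ N), ((1 - c * q ^ y) / (1 - q)) ^ n * (-q) ^ y
        = ((1 - q) ^ n)⁻¹ * ∑ y ∈ Finset.range (p ^ N), (1 - c * q ^ y) ^ n * (-q) ^ y := by
      rw [Finset.mul_sum]
      refine Finset.sum_congr rfl fun y _ => ?_
      rw [div_pow, div_eq_mul_inv]
      ring
    rw [this, aux_sum hp hq n c (hp.pow : Odd (p ^ N))]
    congr 1
    refine Finset.sum_congr rfl fun k _ => ?_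
    rw [← pow_mul, ← pow_mul, mul_comm (k + 1) (p ^ N)]
  rw [show nhds ((1 + q) / 2 * (((1 - q) ^ n)⁻¹ *
        ∑ k ∈ range (n + 1),
          (n.choose k : ℚ_[p]) * (-c) ^ k * (1 + 1) / (q ^ (k + 1) + 1))) = _ from rfl]
  refine Tendsto.congr (fun N => (heq N).symm) ?_
  have h2 : (2 : ℚ_[p]) ≠ 0 := two_ne_zero
  have hA : Tendsto (fun N : ℕ => (1 + q) / (1 + q ^ p ^ N)) atTop (nhds ((1 + q) / 2)) := by
    have h := (aux_tendsto hq).const_add (1 : ℚ_[p])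
    rw [show (2 : ℚ_[p]) = 1 + 1 by norm_num]
    exact tendsto_const_nhds.div h (by norm_num)
  refine hA.mul (tendsto_const_nhds.mul ?_)
  refine tendsto_finset_sum _ fun k _ => ?_
  have hk : Tendsto (fun N : ℕ => (q ^ p ^ N) ^ (k + 1) + 1) atTop (nhds (1 + 1)) := by
    have := ((aux_tendsto hq).pow (k + 1)).add_const 1
    simpa using this
  exact (tendsto_const_nhds.mul hk).div_const _

theorem stmt_7 (p : ℕ) [Fact p.Prime] (hp : Odd p)
    (q : ℚ_[p]) (hq : ‖q - 1‖ < 1) (hq1 : q ≠ 1)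
    (n : ℕ) (hn : 1 ≤ n) :
    ∃ E1 E0 : ℚ_[p],
      Tendsto
        (fun N : ℕ =>
          (1 / ((1 + q ^ p ^ N) / (1 + q))) *
            ∑ y ∈ Finset.range (p ^ N),
              ((1 - q ^ (1 + y)) / (1 - q)) ^ n * (-q) ^ y)
        atTop (nhds E1) ∧
      Tendsto
        (fun N : ℕ =>
          (1 / ((1 + q ^ p ^ N) / (1 + q))) *
            ∑ y ∈ Finset.range (p ^ N),
              ((1 - q ^ y) / (1 - q)) ^ n * (-q) ^ y)
        atTop (nhds E0) ∧
      q * E1 + E0 = 0 := by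
  refine ⟨(1 + q) / 2 * (((1 - q) ^ n)⁻¹ *
      ∑ k ∈ range (n + 1), (n.choose k : ℚ_[p]) * (-q) ^ k * (1 + 1) / (q ^ (k + 1) + 1)),
    (1 + q) / 2 * (((1 - q) ^ n)⁻¹ *
      ∑ k ∈ range (n + 1), (n.choose k : ℚ_[p]) * (-1) ^ k * (1 + 1) / (q ^ (k + 1) + 1)),
    ?_, ?_, ?_⟩
  · refine Tendsto.congr (fun N => ?_) (aux_limit hp hq n q)
    simp only [pow_add, pow_one]
  · refine Tendsto.congr (fun N => ?_) (aux_limit hp hq n 1)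
    simp only [one_mul]
  · have hden := fun k => aux_den_ne hp hq k
    have key : ∀ k ∈ range (n + 1),
        q * ((n.choose k : ℚ_[p]) * (-q) ^ k * (1 + 1) / (q ^ (k + 1) + 1))
          + (n.choose k : ℚ_[p]) * (-1) ^ k * (1 + 1) / (q ^ (k + 1) + 1)
        = (n.choose k : ℚ_[p]) * (-1) ^ k * 2 := by
      intro k _
      have hD := hden k
      field_simp
      ring
    have hsum : ∑ k ∈ range (n + 1), (n.choose k : ℚ_[p]) * (-1) ^ k * 2 = 0 := by
      have hz : ∑ i ∈ range (n + 1), (-1 : ℤ) ^ i * n.choose i = 0 :=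
        Int.alternating_sum_range_choose_of_ne (by omega)
      have : ((∑ i ∈ range (n + 1), (-1 : ℤ) ^ i * n.choose i : ℤ) : ℚ_[p]) = 0 := by
        rw [hz]; norm_num
      push_cast at this
      calc ∑ k ∈ range (n + 1), (n.choose k : ℚ_[p]) * (-1) ^ k * 2
          = 2 * ∑ k ∈ range (n + 1), (-1 : ℚ_[p]) ^ k * (n.choose k : ℚ_[p]) := by
            rw [Finset.mul_sum]; exact Finset.sum_congr rfl fun k _ => by ring
      _ = 0 := by rw [this]; ring
    calc q * ((1 + q) / 2 * (((1 - q) ^ n)⁻¹ *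
          ∑ k ∈ range (n + 1), (n.choose k : ℚ_[p]) * (-q) ^ k * (1 + 1) / (q ^ (k + 1) + 1)))
        + (1 + q) / 2 * (((1 - q) ^ n)⁻¹ *
          ∑ k ∈ range (n + 1), (n.choose k : ℚ_[p]) * (-1) ^ k * (1 + 1) / (q ^ (k + 1) + 1))
        = (1 + q) / 2 * (((1 - q) ^ n)⁻¹ *
          ∑ k ∈ range (n + 1),
            (q * ((n.choose k : ℚ_[p]) * (-q) ^ k * (1 + 1) / (q ^ (k + 1) + 1))
              + (n.choose k : ℚ_[p]) * (-1) ^ k * (1 + 1) / (q ^ (k + 1) + 1))) := by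
          rw [Finset.sum_add_distrib, ← Finset.mul_sum]
          ring
    _ = 0 := by rw [Finset.sum_congr rfl key, hsum]; ring
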